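/- Let X be a binomial random variable with parameters m ∈ ℕ and p ∈ (0,1), so P(X = k) = C(m,k) p^k (1−p)^{m−k} for 0 ≤ k ≤ m. For any function f : ℕ → ℝ with f(0) = 0, we have E[(m − X) f(X+1)/(X+1) − ((1−p)/p) f(X)] = 0. -/

import Mathlib

/-- Stein identity for the binomial distribution `B(m,p)`:
`E[(m − X) f(X+1)/(X+1) − ((1−p)/p) f(X)] = 0` for any `f` with `f 0 = 0`. -/
theorem binomial_stein_identity
    (m : ℕ) (p : ℝ) (hp : p ∈ Set.Ioo (0 : ℝ) 1) (f : ℕ → ℝ) (hf0 : f 0 = 0) :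
    ∑ k ∈ Finset.range (m + 1),
      (((m : ℝ) - k) * f (k + 1) / ((k : ℝ) + 1) - (1 - p) / p * f k) *
        ((m.choose k : ℝ) * p ^ k * (1 - p) ^ (m - k)) = 0 := by
  obtain ⟨hp0, hp1⟩ := hp
  have hpne : p ≠ 0 := ne_of_gt hp0
  set g : ℕ → ℝ := fun k => f (k + 1) * (m.choose (k + 1) : ℝ) * p ^ k * (1 - p) ^ (m - k)
    with hg
  have hT1 : ∀ k ∈ Finset.range (m + 1),
      (((m : ℝ) - k) * f (k + 1) / ((k : ℝ) + 1)) *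
        ((m.choose k : ℝ) * p ^ k * (1 - p) ^ (m - k)) = g k := by
    intro k hk
    have hkm : k ≤ m := Nat.lt_succ_iff.mp (Finset.mem_range.mp hk)
    have hcast : ((m : ℝ) - k) = ((m - k : ℕ) : ℝ) := by
      push_cast [Nat.cast_sub hkm]; ring
    have hch : (m.choose (k + 1) : ℝ) * ((k : ℝ) + 1) = (m.choose k : ℝ) * ((m - k : ℕ) : ℝ) := by
      have := Nat.choose_succ_right_eq m k
      exact_mod_cast congrArg (Nat.cast : ℕ → ℝ) this
    have hk1 : ((k : ℝ) + 1) ≠ 0 := by positivity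
    rw [hg]
    show _ = f (k + 1) * (m.choose (k + 1) : ℝ) * p ^ k * (1 - p) ^ (m - k)
    rw [hcast, div_mul_eq_mul_div, div_eq_iff hk1]
    linear_combination -f (k + 1) * p ^ k * (1 - p) ^ (m - k) * hch
  have hT2 : ∀ i ∈ Finset.range m,
      ((1 - p) / p * f (i + 1)) *
        ((m.choose (i + 1) : ℝ) * p ^ (i + 1) * (1 - p) ^ (m - (i + 1))) = g i := by
    intro i hi
    have him : i < m := Finset.mem_range.mp hi
    have hsub : m - i = (m - (i + 1)) + 1 := by omega
    show _ = f (i + 1) * (m.choose (i + 1) : ℝ) * p ^ i * (1 - p) ^ (m - i)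
    rw [hsub, pow_succ, pow_succ]
    field_simp
  calc ∑ k ∈ Finset.range (m + 1),
      (((m : ℝ) - k) * f (k + 1) / ((k : ℝ) + 1) - (1 - p) / p * f k) *
        ((m.choose k : ℝ) * p ^ k * (1 - p) ^ (m - k))
      = ∑ k ∈ Finset.range (m + 1),
        ((((m : ℝ) - k) * f (k + 1) / ((k : ℝ) + 1)) *
            ((m.choose k : ℝ) * p ^ k * (1 - p) ^ (m - k))
          - ((1 - p) / p * f k) * ((m.choose k : ℝ) * p ^ k * (1 - p) ^ (m - k))) := by
        apply Finset.sum_congr rfl; intro k _; ring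
    _ = (∑ k ∈ Finset.range (m + 1), (((m : ℝ) - k) * f (k + 1) / ((k : ℝ) + 1)) *
            ((m.choose k : ℝ) * p ^ k * (1 - p) ^ (m - k)))
        - ∑ k ∈ Finset.range (m + 1), ((1 - p) / p * f k) *
            ((m.choose k : ℝ) * p ^ k * (1 - p) ^ (m - k)) := Finset.sum_sub_distrib _ _
    _ = (∑ k ∈ Finset.range (m + 1), g k) - ∑ k ∈ Finset.range m, g k := by
        congr 1
        · exact Finset.sum_congr rfl hT1
        · rw [Finset.sum_range_succ']
          simp [hf0]
          exact Finset.sum_congr rfl hT2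
    _ = g m := by rw [Finset.sum_range_succ]; ring
    _ = 0 := by simp [hg, Nat.choose_succ_self]
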